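/- Let A be a random subset of {1,…,n} with each element included independently with probability α, β = 1 − α. For positive integers d₁, d₂, E[I_A(d₁) I_A(d₂)] = 1 − β^⌊n/d₁⌋ − β^⌊n/d₂⌋ + β^{⌊n/d₁⌋ + ⌊n/d₂⌋ − ⌊n/lcm(d₁,d₂)⌋}. -/

import Mathlib

/-- Probability of drawing exactly the subset `A ⊆ {1,…,n}` in the model `B(n,α)`. -/
noncomputable def prob (n : ℕ) (α : ℝ) (A : Finset ℕ) : ℝ :=
  α ^ A.card * (1 - α) ^ (n - A.card)

lemma sum_prob_disjoint (n : ℕ) (α : ℝ) (U : Finset ℕ) (hU : U ⊆ Finset.Icc 1 n) :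
    ∑ A ∈ (Finset.Icc 1 n).powerset, prob n α A * (if Disjoint A U then 1 else 0)
      = (1 - α) ^ U.card := by
  classical
  have h1 : ∀ A : Finset ℕ, prob n α A * (if Disjoint A U then 1 else 0)
      = if Disjoint A U then prob n α A else 0 := by intro A; split <;> ring
  simp_rw [h1]
  rw [← Finset.sum_filter]
  have h2 : (Finset.Icc 1 n).powerset.filter (fun A => Disjoint A U)
      = ((Finset.Icc 1 n) \ U).powerset := by
    ext A
    simp [Finset.mem_powerset, Finset.subset_sdiff, Finset.mem_filter]
  rw [h2]
  set V := (Finset.Icc 1 n) \ U with hV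
  have hcardIcc : (Finset.Icc 1 n).card = n := by rw [Nat.card_Icc]; omega
  have hUn : U.card ≤ n := by rw [← hcardIcc]; exact Finset.card_le_card hU
  have hVcard : V.card = n - U.card := by
    rw [hV, Finset.card_sdiff_of_subset hU, hcardIcc]
  have key : ∀ A ∈ V.powerset, prob n α A
      = (1 - α) ^ U.card * (α ^ A.card * (1 - α) ^ (V.card - A.card)) := by
    intro A hA
    rw [Finset.mem_powerset] at hA
    have hAc : A.card ≤ V.card := Finset.card_le_card hA
    have : n - A.card = U.card + (V.card - A.card) := by omega
    rw [prob, this, pow_add]; ring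
  rw [Finset.sum_congr rfl key, ← Finset.mul_sum]
  have := Finset.prod_add (fun _ : ℕ => α) (fun _ : ℕ => (1 - α)) V
  simp only [Finset.prod_const] at this
  have h3 : ∑ t ∈ V.powerset, α ^ t.card * (1 - α) ^ (V.card - t.card) = 1 := by
    have h4 : ∀ t ∈ V.powerset, α ^ t.card * (1 - α) ^ ((V \ t).card)
        = α ^ t.card * (1 - α) ^ (V.card - t.card) := by
      intro t ht
      rw [Finset.mem_powerset] at ht
      rw [Finset.card_sdiff_of_subset ht]
    rw [← Finset.sum_congr rfl h4, ← this]
    norm_num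
  rw [h3, mul_one]

/-- `E[I_A(d₁) I_A(d₂)] = 1 − β^⌊n/d₁⌋ − β^⌊n/d₂⌋ + β^{⌊n/d₁⌋+⌊n/d₂⌋−⌊n/[d₁,d₂]⌋}`
in the model `B(n,α)`, where `β = 1 − α`. -/
theorem expectation_indicator_mul (n : ℕ) (α : ℝ) (hα0 : 0 ≤ α) (hα1 : α ≤ 1)
    (d₁ d₂ : ℕ) (hd₁ : 0 < d₁) (hd₂ : 0 < d₂) :
    ∑ A ∈ (Finset.Icc 1 n).powerset,
        prob n α A * ((if ∃ k ∈ A, d₁ ∣ k then 1 else 0) *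
          (if ∃ k ∈ A, d₂ ∣ k then 1 else 0))
      = 1 - (1 - α) ^ (n / d₁) - (1 - α) ^ (n / d₂)
          + (1 - α) ^ (n / d₁ + n / d₂ - n / Nat.lcm d₁ d₂) := by
  classical
  set S := Finset.Icc 1 n with hS
  set D₁ := S.filter (d₁ ∣ ·) with hD₁
  set D₂ := S.filter (d₂ ∣ ·) with hD₂
  have hIccIoc : S = Finset.Ioc 0 n := by rw [hS, ← Finset.Icc_add_one_left_eq_Ioc]; rfl
  have hD₁card : D₁.card = n / d₁ := by
    rw [hD₁, hIccIoc]; exact Nat.Ioc_filter_dvd_card_eq_div n d₁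
  have hD₂card : D₂.card = n / d₂ := by
    rw [hD₂, hIccIoc]; exact Nat.Ioc_filter_dvd_card_eq_div n d₂
  have hinter : D₁ ∩ D₂ = S.filter (Nat.lcm d₁ d₂ ∣ ·) := by
    rw [hD₁, hD₂, ← Finset.filter_and]
    apply Finset.filter_congr
    intro x _
    simp [Nat.lcm_dvd_iff]
  have hintercard : (D₁ ∩ D₂).card = n / Nat.lcm d₁ d₂ := by
    rw [hinter, hIccIoc]; exact Nat.Ioc_filter_dvd_card_eq_div n _
  have hucard : (D₁ ∪ D₂).card = n / d₁ + n / d₂ - n / Nat.lcm d₁ d₂ := by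
    have := Finset.card_union_add_card_inter D₁ D₂
    omega
  -- rewrite each summand
  have step : ∀ A ∈ S.powerset,
      prob n α A * ((if ∃ k ∈ A, d₁ ∣ k then (1:ℝ) else 0) *
          (if ∃ k ∈ A, d₂ ∣ k then 1 else 0))
      = prob n α A * (if Disjoint A (∅ : Finset ℕ) then 1 else 0)
        - prob n α A * (if Disjoint A D₁ then 1 else 0)
        - prob n α A * (if Disjoint A D₂ then 1 else 0)
        + prob n α A * (if Disjoint A (D₁ ∪ D₂) then 1 else 0) := by
    intro A hA
    rw [Finset.mem_powerset] at hA
    have e1 : (∃ k ∈ A, d₁ ∣ k) ↔ ¬ Disjoint A D₁ := by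
      rw [Finset.not_disjoint_iff]
      constructor
      · rintro ⟨k, hk, hdvd⟩
        exact ⟨k, hk, by rw [hD₁, Finset.mem_filter]; exact ⟨hA hk, hdvd⟩⟩
      · rintro ⟨k, hk, hk'⟩
        rw [hD₁, Finset.mem_filter] at hk'
        exact ⟨k, hk, hk'.2⟩
    have e2 : (∃ k ∈ A, d₂ ∣ k) ↔ ¬ Disjoint A D₂ := by
      rw [Finset.not_disjoint_iff]
      constructor
      · rintro ⟨k, hk, hdvd⟩
        exact ⟨k, hk, by rw [hD₂, Finset.mem_filter]; exact ⟨hA hk, hdvd⟩⟩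
      · rintro ⟨k, hk, hk'⟩
        rw [hD₂, Finset.mem_filter] at hk'
        exact ⟨k, hk, hk'.2⟩
    have e3 : Disjoint A (D₁ ∪ D₂) ↔ Disjoint A D₁ ∧ Disjoint A D₂ :=
      Finset.disjoint_union_right
    simp only [e1, e2, e3, Finset.disjoint_empty_right, if_true]
    by_cases h1 : Disjoint A D₁ <;> by_cases h2 : Disjoint A D₂ <;>
      simp [h1, h2] <;> ring
  rw [Finset.sum_congr rfl step]
  rw [Finset.sum_add_distrib, Finset.sum_sub_distrib, Finset.sum_sub_distrib]
  rw [sum_prob_disjoint n α ∅ (Finset.empty_subset _),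
      sum_prob_disjoint n α D₁ (Finset.filter_subset _ _),
      sum_prob_disjoint n α D₂ (Finset.filter_subset _ _),
      sum_prob_disjoint n α (D₁ ∪ D₂)
        (Finset.union_subset (Finset.filter_subset _ _) (Finset.filter_subset _ _))]
  rw [hD₁card, hD₂card, hucard]
  norm_num
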